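/- arXiv:0905.3316 — 2 statements merged into one kernel-verified Lean document; each statement's English description precedes it below -/
import Mathlib

section
/- Let k, p be positive integers, F analytic at 0, and define (J₂F)(x) = (−1)^{p+k} F(−x). If φ_F(x; ε, η) denotes the solution of d(y²)/dx = −2k x^{2k−1} A_F(εx) − ε^{p} y x^{p+k−1} B_F(εx) on [0, η] that vanishes at x = η (as given by the preceding corollary), then the function y₂(x) = φ_{J₂F}(−x; ε, η), defined for x ∈ [−η, 0], is a solution of the same equation d(y²)/dx = −2k x^{2k−1} A_F(εx) − ε^{p} y x^{p+k−1} B_F(εx); moreover y₂(−η) = 0 and y₂(x) = (η^{2k} − x^{2k})^{1/2} + O(ε). -/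
/-- `A_G(z) = 1 + z^(2p) G(z)²`. -/
noncomputable def AfunR (p : ℕ) (G : ℝ → ℝ) (z : ℝ) : ℝ :=
  1 + z ^ (2 * p) * (G z) ^ 2

/-- `B_G(z) = 2 z G′(z) + 2(p+2k) G(z)`. -/
noncomputable def BfunR (k p : ℕ) (G : ℝ → ℝ) (z : ℝ) : ℝ :=
  2 * z * deriv G z + 2 * ((p : ℝ) + 2 * k) * G z

/-- `(J₂G)(x) = (−1)^(p+k) G(−x)`. -/
noncomputable def J2 (k p : ℕ) (G : ℝ → ℝ) : ℝ → ℝ :=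
  fun x => (-1 : ℝ) ^ (p + k) * G (-x)

/-- `φ` is the family of "first quadrant" solutions for the vector field
built from `G`: for all admissible `(ε,η)`, `x ↦ φ x ε η` is the
nonnegative solution on `[0,η]` of `d(y²)/dx = −2k x^(2k−1) A_G(εx) −
ε^p y x^(p+k−1) B_G(εx)` vanishing at `x = η` (and positive on `[0,η)` for
`ε = 0`). -/
def SolFam (k p : ℕ) (G : ℝ → ℝ) (ε₀ η₀ : ℝ) (φ : ℝ → ℝ → ℝ → ℝ) : Prop :=
  ∀ ε η : ℝ, |ε| < ε₀ → η ∈ Set.Ioo (1 - η₀) (1 + η₀) →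
    φ η ε η = 0 ∧
    (∀ x ∈ Set.Icc (0:ℝ) η, 0 ≤ φ x ε η) ∧
    (ε = 0 → ∀ x ∈ Set.Ico (0:ℝ) η, 0 < φ x ε η) ∧
    (∀ x ∈ Set.Icc (0:ℝ) η,
      HasDerivWithinAt (fun t => (φ t ε η) ^ 2)
        (-2 * k * x ^ (2 * k - 1) * AfunR p G (ε * x)
          - ε ^ p * φ x ε η * x ^ (p + k - 1) * BfunR k p G (ε * x))
        (Set.Icc 0 η) x)

lemma AfunR_J2 (k p : ℕ) (F : ℝ → ℝ) (z : ℝ) :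
    AfunR p (J2 k p F) (-z) = AfunR p F z := by
  unfold AfunR J2
  rw [(even_two_mul p).neg_pow, neg_neg, mul_pow, ← pow_mul,
    Even.neg_one_pow ⟨p + k, by ring⟩, one_mul]

lemma BfunR_J2 (k p : ℕ) (F : ℝ → ℝ) (z : ℝ) :
    BfunR k p (J2 k p F) (-z) = (-1 : ℝ) ^ (p + k) * BfunR k p F z := by
  have hd : deriv (fun x : ℝ => (-1 : ℝ) ^ (p + k) * F (-x)) (-z)
      = (-1 : ℝ) ^ (p + k) * (-(deriv F z)) := by
    rw [deriv_const_mul_field, deriv_comp_neg, neg_neg]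
  unfold BfunR J2
  rw [hd, neg_neg]
  ring

lemma derivBound (k p : ℕ) (hk : 1 ≤ k) (hp : 1 ≤ p) (G : ℝ → ℝ) (r M : ℝ)
    (hr0 : 0 < r) (hr1 : r ≤ 1) (hM0 : 0 ≤ M)
    (hMG : ∀ z : ℝ, |z| ≤ r → |G z| ≤ M)
    (hMG' : ∀ z : ℝ, |z| ≤ r → |deriv G z| ≤ M)
    (ε t φv Φ : ℝ) (hεr : |ε| ≤ r / 2) (hε1 : |ε| ≤ 1)
    (ht0 : 0 ≤ t) (ht2 : t ≤ 2) (hφ0 : 0 ≤ φv) (hφΦ : φv ≤ Φ) :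
    |(-2 * (k : ℝ) * t ^ (2 * k - 1) * AfunR p G (ε * t)
        - ε ^ p * φv * t ^ (p + k - 1) * BfunR k p G (ε * t))
      - (-(2 * (k : ℝ)) * t ^ (2 * k - 1))|
      ≤ |ε| * ((2 * (k : ℝ) * 2 ^ (2 * k - 1) * 2 * M ^ 2)
          + (2 ^ (p + k - 1) * (2 * M + 2 * ((p : ℝ) + 2 * k) * M)) * Φ) := by
  set z := ε * t with hzdef
  have hz : |z| ≤ r := by
    rw [hzdef, abs_mul, abs_of_nonneg ht0]
    calc |ε| * t ≤ (r / 2) * 2 := by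
          apply mul_le_mul hεr ht2 ht0 (by linarith)
      _ = r := by ring
  have hz1 : |z| ≤ 1 := hz.trans hr1
  -- bound on a := z^(2p) * (G z)^2
  have hΦ0 : 0 ≤ Φ := hφ0.trans hφΦ
  have ha : |z ^ (2 * p) * (G z) ^ 2| ≤ 2 * |ε| * M ^ 2 := by
    have h1 : |z ^ (2 * p)| ≤ |z| := by
      rw [abs_pow]
      exact pow_le_of_le_one (abs_nonneg z) hz1 (by omega)
    have h2 : |(G z) ^ 2| ≤ M ^ 2 := by
      rw [abs_pow]
      exact pow_le_pow_left₀ (abs_nonneg _) (hMG z hz) 2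
    have h3 : |z| ≤ 2 * |ε| := by
      rw [hzdef, abs_mul, abs_of_nonneg ht0]
      nlinarith [abs_nonneg ε]
    calc |z ^ (2 * p) * (G z) ^ 2| = |z ^ (2 * p)| * |(G z) ^ 2| := abs_mul _ _
      _ ≤ (2 * |ε|) * M ^ 2 := by
          apply mul_le_mul (h1.trans h3) h2 (abs_nonneg _) (by positivity)
      _ = 2 * |ε| * M ^ 2 := by ring
  have hb : |BfunR k p G z| ≤ 2 * M + 2 * ((p : ℝ) + 2 * k) * M := by
    unfold BfunR
    have h1 : |2 * z * deriv G z| ≤ 2 * M := by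
      rw [abs_mul, abs_mul, abs_two]
      nlinarith [mul_le_mul hz1 (hMG' z hz) (abs_nonneg (deriv G z)) zero_le_one]
    have h2 : |2 * ((p : ℝ) + 2 * k) * G z| ≤ 2 * ((p : ℝ) + 2 * k) * M := by
      rw [abs_mul]
      have hc : |2 * ((p : ℝ) + 2 * k)| = 2 * ((p : ℝ) + 2 * k) := by
        rw [abs_of_nonneg]; positivity
      rw [hc]
      exact mul_le_mul_of_nonneg_left (hMG z hz) (by positivity)
    calc |2 * z * deriv G z + 2 * ((p : ℝ) + 2 * k) * G z|
        ≤ |2 * z * deriv G z| + |2 * ((p : ℝ) + 2 * k) * G z| := abs_add_le _ _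
      _ ≤ 2 * M + 2 * ((p : ℝ) + 2 * k) * M := add_le_add h1 h2
  have htn : t ^ (2 * k - 1) ≤ 2 ^ (2 * k - 1) := pow_le_pow_left₀ ht0 ht2 _
  have htm : t ^ (p + k - 1) ≤ 2 ^ (p + k - 1) := pow_le_pow_left₀ ht0 ht2 _
  have hεp : |ε ^ p| ≤ |ε| := by
    rw [abs_pow]
    exact pow_le_of_le_one (abs_nonneg ε) hε1 (by omega)
  have hEq : (-2 * (k : ℝ) * t ^ (2 * k - 1) * AfunR p G z
        - ε ^ p * φv * t ^ (p + k - 1) * BfunR k p G z)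
      - (-(2 * (k : ℝ)) * t ^ (2 * k - 1))
      = -((2 * (k : ℝ) * t ^ (2 * k - 1)) * (z ^ (2 * p) * (G z) ^ 2))
        + -((ε ^ p * φv * t ^ (p + k - 1)) * BfunR k p G z) := by
    unfold AfunR; ring
  rw [hEq]
  have hT1 : |-((2 * (k : ℝ) * t ^ (2 * k - 1)) * (z ^ (2 * p) * (G z) ^ 2))|
      ≤ |ε| * (2 * (k : ℝ) * 2 ^ (2 * k - 1) * 2 * M ^ 2) := by
    rw [abs_neg, abs_mul, abs_of_nonneg (by positivity : (0:ℝ) ≤ 2 * (k : ℝ) * t ^ (2 * k - 1))]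
    have hkc : (0:ℝ) ≤ 2 * (k : ℝ) * t ^ (2 * k - 1) := by positivity
    calc 2 * (k : ℝ) * t ^ (2 * k - 1) * |z ^ (2 * p) * G z ^ 2|
        ≤ (2 * (k : ℝ) * 2 ^ (2 * k - 1)) * (2 * |ε| * M ^ 2) := by
          apply mul_le_mul _ ha (abs_nonneg _) (by positivity)
          have : (0:ℝ) ≤ (k:ℝ) := by positivity
          nlinarith [pow_nonneg ht0 (2 * k - 1)]
      _ = |ε| * (2 * (k : ℝ) * 2 ^ (2 * k - 1) * 2 * M ^ 2) := by ring
  have hT2 : |-((ε ^ p * φv * t ^ (p + k - 1)) * BfunR k p G z)|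
      ≤ |ε| * ((2 ^ (p + k - 1) * (2 * M + 2 * ((p : ℝ) + 2 * k) * M)) * Φ) := by
    rw [abs_neg, abs_mul, abs_mul, abs_mul]
    rw [abs_of_nonneg hφ0, abs_of_nonneg (pow_nonneg ht0 _)]
    have hMB0 : (0:ℝ) ≤ 2 * M + 2 * ((p : ℝ) + 2 * k) * M := by positivity
    calc |ε ^ p| * φv * t ^ (p + k - 1) * |BfunR k p G z|
        ≤ |ε| * Φ * 2 ^ (p + k - 1) * (2 * M + 2 * ((p : ℝ) + 2 * k) * M) := by
          apply mul_le_mul _ hb (abs_nonneg _) (by positivity)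
          apply mul_le_mul _ htm (pow_nonneg ht0 _) (by positivity)
          exact mul_le_mul hεp hφΦ hφ0 (abs_nonneg ε)
      _ = |ε| * ((2 ^ (p + k - 1) * (2 * M + 2 * ((p : ℝ) + 2 * k) * M)) * Φ) := by ring
  calc |(-((2 * (k : ℝ) * t ^ (2 * k - 1)) * (z ^ (2 * p) * (G z) ^ 2)))
        + (-((ε ^ p * φv * t ^ (p + k - 1)) * BfunR k p G z))|
      ≤ |-((2 * (k : ℝ) * t ^ (2 * k - 1)) * (z ^ (2 * p) * (G z) ^ 2))|
        + |-((ε ^ p * φv * t ^ (p + k - 1)) * BfunR k p G z)| := abs_add_le _ _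
    _ ≤ _ := by
        rw [mul_add]
        exact add_le_add hT1 hT2

lemma part1 (k p : ℕ) (hk : 1 ≤ k) (hp : 1 ≤ p)
    (F : ℝ → ℝ)
    (ε₀ η₀ : ℝ) (hε₀ : 0 < ε₀) (hη₀ : η₀ ∈ Set.Ioo (0:ℝ) 1)
    (φ₂ : ℝ → ℝ → ℝ → ℝ)
    (hφ₂ : SolFam k p (J2 k p F) ε₀ η₀ φ₂) :
    (∀ ε η : ℝ, |ε| < ε₀ → η ∈ Set.Ioo (1 - η₀) (1 + η₀) →
      φ₂ (-(-η)) ε η = 0 ∧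
      (∀ x ∈ Set.Icc (-η) (0:ℝ),
        HasDerivWithinAt (fun t => (φ₂ (-t) ε η) ^ 2)
          (-2 * k * x ^ (2 * k - 1) * AfunR p F (ε * x)
            - ε ^ p * φ₂ (-x) ε η * x ^ (p + k - 1) * BfunR k p F (ε * x))
          (Set.Icc (-η) 0) x)) := by
  intro ε η hε hη
  obtain ⟨hzero, hnonneg, -, hODE⟩ := hφ₂ ε η hε hη
  refine ⟨by simpa using hzero, ?_⟩
  intro x hx
  have hxmem : -x ∈ Set.Icc (0:ℝ) η := ⟨by linarith [hx.2], by linarith [hx.1]⟩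
  have hg := hODE (-x) hxmem
  have hneg : HasDerivWithinAt (fun t : ℝ => -t) (-1) (Set.Icc (-η) 0) x :=
    (hasDerivAt_neg x).hasDerivWithinAt
  have hmaps : Set.MapsTo (fun t : ℝ => -t) (Set.Icc (-η) 0) (Set.Icc 0 η) := by
    intro t ht
    simp only [Set.mem_Icc] at ht ⊢
    exact ⟨by linarith [ht.2], by linarith [ht.1]⟩
  have hcomp := HasDerivWithinAt.comp (x := x) hg hneg hmaps
  have hfun : (fun t => (φ₂ (-t) ε η) ^ 2)
      = ((fun t => (φ₂ t ε η) ^ 2) ∘ (fun t : ℝ => -t)) := rfl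
  rw [hfun]
  convert hcomp using 1
  all_goals try (with_reducible_and_instances rfl)
  have hA : AfunR p (J2 k p F) (ε * -x) = AfunR p F (ε * x) := by
    rw [show ε * -x = -(ε * x) by ring, AfunR_J2]
  have hB : BfunR k p (J2 k p F) (ε * -x) = (-1 : ℝ) ^ (p + k) * BfunR k p F (ε * x) := by
    rw [show ε * -x = -(ε * x) by ring, BfunR_J2]
  rw [hA, hB]
  have hodd1 : (-x : ℝ) ^ (2 * k - 1) = -(x ^ (2 * k - 1)) :=
    Odd.neg_pow ⟨k - 1, by omega⟩ x
  have hodd2 : (-x : ℝ) ^ (p + k - 1) = (-1 : ℝ) ^ (p + k - 1) * x ^ (p + k - 1) := by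
    rw [neg_pow]
  rw [hodd1, hodd2]
  have hsgn : ((-1 : ℝ)) ^ (p + k - 1) * (-1 : ℝ) ^ (p + k) = -1 := by
    rw [← pow_add]
    exact Odd.neg_one_pow ⟨p + k - 1, by omega⟩
  linear_combination -(ε ^ p * φ₂ (-x) ε η * x ^ (p + k - 1) * BfunR k p F (ε * x)) * hsgn

set_option maxHeartbeats 1000000 in
lemma part2 (k p : ℕ) (hk : 1 ≤ k) (hp : 1 ≤ p)
    (F : ℝ → ℝ) (hF : AnalyticAt ℝ F 0)
    (ε₀ η₀ : ℝ) (hε₀ : 0 < ε₀) (hη₀ : η₀ ∈ Set.Ioo (0:ℝ) 1)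
    (φ₂ : ℝ → ℝ → ℝ → ℝ)
    (hφ₂ : SolFam k p (J2 k p F) ε₀ η₀ φ₂) :
    (∃ C > (0:ℝ), ∃ ε' > (0:ℝ), ε' ≤ ε₀ ∧
      ∀ ε η : ℝ, |ε| < ε' → η ∈ Set.Ioo (1 - η₀) (1 + η₀) →
        ∀ x ∈ Set.Icc (-η) (0:ℝ),
          |φ₂ (-x) ε η - Real.sqrt (η ^ (2 * k) - x ^ (2 * k))| ≤ C * |ε|) := by
  -- G := J2 k p F is analytic at 0
  set G : ℝ → ℝ := J2 k p F with hGdef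
  have hFneg : AnalyticAt ℝ (fun x : ℝ => F (-x)) 0 := by
    have hneg : AnalyticAt ℝ (fun x : ℝ => -x) 0 := analyticAt_id.neg
    have hF' : AnalyticAt ℝ F ((fun x : ℝ => -x) 0) := by simpa using hF
    exact hF'.comp hneg
  have hG : AnalyticAt ℝ G 0 := by
    rw [hGdef]
    exact (analyticAt_const (v := ((-1:ℝ) ^ (p + k)))).mul hFneg
  -- radius of analyticity
  obtain ⟨δ, hδ0, hδ⟩ := Metric.eventually_nhds_iff.mp hG.eventually_analyticAt
  set r : ℝ := min (δ / 2) 1 with hrdef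
  have hr0 : 0 < r := lt_min (by linarith) one_pos
  have hr1 : r ≤ 1 := min_le_right _ _
  have hball : ∀ z : ℝ, |z| ≤ r → AnalyticAt ℝ G z := by
    intro z hz
    apply hδ
    rw [Real.dist_eq, sub_zero]
    calc |z| ≤ r := hz
      _ ≤ δ / 2 := min_le_left _ _
      _ < δ := by linarith
  -- bounds on G and deriv G on [-r, r]
  have hOn : AnalyticOnNhd ℝ G (Metric.closedBall 0 r) := by
    intro z hz
    apply hball
    rwa [Metric.mem_closedBall, Real.dist_eq, sub_zero] at hz
  have hcontG : ContinuousOn G (Metric.closedBall 0 r) :=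
    fun z hz => (hOn z hz).continuousAt.continuousWithinAt
  have hcontG' : ContinuousOn (deriv G) (Metric.closedBall 0 r) :=
    fun z hz => ((hOn.deriv) z hz).continuousAt.continuousWithinAt
  obtain ⟨M₁, hM₁⟩ := (isCompact_closedBall (0:ℝ) r).exists_bound_of_continuousOn hcontG
  obtain ⟨M₂, hM₂⟩ := (isCompact_closedBall (0:ℝ) r).exists_bound_of_continuousOn hcontG'
  set M : ℝ := max (max M₁ M₂) 0 with hMdef
  have hM0 : 0 ≤ M := le_max_right _ _
  have hMG : ∀ z : ℝ, |z| ≤ r → |G z| ≤ M := by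
    intro z hz
    have := hM₁ z (by rwa [Metric.mem_closedBall, Real.dist_eq, sub_zero])
    rw [Real.norm_eq_abs] at this
    exact this.trans ((le_max_left _ _).trans (le_max_left _ _))
  have hMG' : ∀ z : ℝ, |z| ≤ r → |deriv G z| ≤ M := by
    intro z hz
    have := hM₂ z (by rwa [Metric.mem_closedBall, Real.dist_eq, sub_zero])
    rw [Real.norm_eq_abs] at this
    exact this.trans ((le_max_right _ _).trans (le_max_left _ _))
  -- constants
  set K₁ : ℝ := 2 * (k : ℝ) * 2 ^ (2 * k - 1) * 2 * M ^ 2 with hK₁def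
  set K₂ : ℝ := 2 ^ (p + k - 1) * (2 * M + 2 * ((p : ℝ) + 2 * k) * M) with hK₂def
  have hK₁0 : 0 ≤ K₁ := by rw [hK₁def]; positivity
  have hK₂0 : 0 ≤ K₂ := by rw [hK₂def]; positivity
  set a : ℝ := 4 ^ k + 2 * K₁ with hadef
  have ha1 : 1 ≤ a := by
    have h4 : (1:ℝ) ≤ 4 ^ k := one_le_pow₀ (by norm_num)
    rw [hadef]
    linarith
  set Φ₀ : ℝ := a + 1 with hΦ₀def
  have hΦ₀0 : 0 ≤ Φ₀ := by rw [hΦ₀def]; linarith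
  set Kt : ℝ := K₁ + K₂ * Φ₀ with hKtdef
  have hKt0 : 0 ≤ Kt := by rw [hKtdef]; positivity
  set c : ℝ := (1 - η₀) ^ (2 * k - 1) with hcdef
  have hc0 : 0 < c := by
    rw [hcdef]
    exact pow_pos (by linarith [hη₀.2]) _
  set C : ℝ := (Kt + 1) * Real.sqrt (2 / c) with hCdef
  have hC0 : 0 < C := by
    rw [hCdef]
    apply mul_pos (by linarith)
    exact Real.sqrt_pos.mpr (by positivity)
  set ε' : ℝ := min ε₀ (min (r / 2) (min 1 (1 / (2 * K₂ + 2)))) with hε'def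
  have hε'0 : 0 < ε' := by
    rw [hε'def]
    apply lt_min hε₀
    apply lt_min (by linarith)
    apply lt_min one_pos
    positivity
  refine ⟨C, hC0, ε', hε'0, min_le_left _ _, ?_⟩
  intro ε η hεlt hη x hx
  have hεε₀ : |ε| < ε₀ := hεlt.trans_le (min_le_left _ _)
  have hεr : |ε| ≤ r / 2 :=
    (hεlt.trans_le ((min_le_right _ _).trans (min_le_left _ _))).le
  have hε1 : |ε| ≤ 1 :=
    (hεlt.trans_le ((min_le_right _ _).trans ((min_le_right _ _).trans (min_le_left _ _)))).le
  have hεK₂ : 2 * K₂ * |ε| ≤ 1 := by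
    have h := (hεlt.trans_le ((min_le_right _ _).trans
      ((min_le_right _ _).trans (min_le_right _ _)))).le
    have h2 : |ε| * (2 * K₂ + 2) ≤ 1 := by
      rw [← le_div_iff₀ (by positivity : (0:ℝ) < 2 * K₂ + 2)]
      exact h
    nlinarith [abs_nonneg ε]
  obtain ⟨hzero, hnonneg, -, hODE⟩ := hφ₂ ε η hεε₀ hη
  have hη1 : 1 - η₀ < η := hη.1
  have hη2 : η < 1 + η₀ := hη.2
  have hηpos : 0 < η := by have := hη₀.2; linarith
  have hη2' : η ≤ 2 := by have := hη₀.2; linarith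
  -- the solution squared and its comparison
  set g : ℝ → ℝ := fun t => φ₂ t ε η ^ 2 with hgdef
  set u : ℝ → ℝ := fun t => g t - (η ^ (2 * k) - t ^ (2 * k)) with hudef
  set D : ℝ → ℝ := fun t =>
    (-2 * (k : ℝ) * t ^ (2 * k - 1) * AfunR p G (ε * t)
      - ε ^ p * φ₂ t ε η * t ^ (p + k - 1) * BfunR k p G (ε * t))
      - (-(2 * (k : ℝ)) * t ^ (2 * k - 1)) with hDdef
  have hu' : ∀ t ∈ Set.Icc (0:ℝ) η, HasDerivWithinAt u (D t) (Set.Icc 0 η) t := by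
    intro t ht
    have h1 := hODE t ht
    have h2 : HasDerivWithinAt (fun s : ℝ => η ^ (2 * k) - s ^ (2 * k))
        (-(2 * (k : ℝ)) * t ^ (2 * k - 1)) (Set.Icc 0 η) t := by
      have := ((hasDerivAt_pow (2 * k) t).const_sub (η ^ (2 * k))).hasDerivWithinAt
        (s := Set.Icc (0:ℝ) η)
      convert this using 1
      all_goals try (with_reducible_and_instances rfl)
      push_cast
      ring
    exact h1.sub h2
  have huη : u η = 0 := by
    rw [hudef]
    simp only [hgdef]
    rw [hzero]
    ring
  -- key estimate, parameterized by a pointwise bound Φ on φ₂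
  have key : ∀ Φ : ℝ, 0 ≤ Φ → (∀ t ∈ Set.Icc (0:ℝ) η, φ₂ t ε η ≤ Φ) →
      ∀ s ∈ Set.Icc (0:ℝ) η, |u s| ≤ (|ε| * (K₁ + K₂ * Φ)) * (η - s) := by
    intro Φ hΦnn hΦ s hs
    have hbound : ∀ t ∈ Set.Icc (0:ℝ) η, ‖D t‖ ≤ |ε| * (K₁ + K₂ * Φ) := by
      intro t ht
      rw [Real.norm_eq_abs, hDdef]
      exact derivBound k p hk hp G r M hr0 hr1 hM0 hMG hMG' ε t (φ₂ t ε η) Φ hεr hε1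
        ht.1 (ht.2.trans hη2') (hnonneg t ht) (hΦ t ht)
    have hηmem : η ∈ Set.Icc (0:ℝ) η := ⟨le_of_lt hηpos, le_refl η⟩
    have := (convex_Icc (0:ℝ) η).norm_image_sub_le_of_norm_hasDerivWithin_le
      hu' hbound hηmem hs
    rw [huη, sub_zero, Real.norm_eq_abs, Real.norm_eq_abs,
      abs_of_nonpos (by linarith [hs.2] : s - η ≤ 0)] at this
    calc |u s| ≤ (|ε| * (K₁ + K₂ * Φ)) * -(s - η) := this
      _ = (|ε| * (K₁ + K₂ * Φ)) * (η - s) := by ring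
  -- a priori bound on φ₂ via a maximum of g
  have hgcont : ContinuousOn g (Set.Icc (0:ℝ) η) :=
    fun t ht => (hODE t ht).continuousWithinAt
  obtain ⟨x₀, hx₀mem, hmax⟩ := (isCompact_Icc (a := (0:ℝ)) (b := η)).exists_isMaxOn
    ⟨0, ⟨le_refl 0, le_of_lt hηpos⟩⟩ hgcont
  set Φ : ℝ := Real.sqrt (g x₀) with hΦdef
  have hΦnn : 0 ≤ Φ := Real.sqrt_nonneg _
  have hΦpt : ∀ t ∈ Set.Icc (0:ℝ) η, φ₂ t ε η ≤ Φ := by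
    intro t ht
    have h1 : g t ≤ g x₀ := hmax ht
    rw [hΦdef]
    calc φ₂ t ε η = Real.sqrt ((φ₂ t ε η) ^ 2) := (Real.sqrt_sq (hnonneg t ht)).symm
      _ = Real.sqrt (g t) := rfl
      _ ≤ Real.sqrt (g x₀) := Real.sqrt_le_sqrt h1
  have hS := key Φ hΦnn hΦpt x₀ hx₀mem
  have hΦsq : Φ ^ 2 = g x₀ := Real.sq_sqrt (by rw [hgdef]; positivity)
  have hhx₀ : η ^ (2 * k) - x₀ ^ (2 * k) ≤ 4 ^ k := by
    have h1 : η ^ (2 * k) ≤ 2 ^ (2 * k) := pow_le_pow_left₀ (le_of_lt hηpos) hη2' _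
    have h2 : (2:ℝ) ^ (2 * k) = 4 ^ k := by
      rw [pow_mul]; norm_num
    have h3 : 0 ≤ x₀ ^ (2 * k) := pow_nonneg hx₀mem.1 _
    linarith
  have hΦub : Φ ≤ Φ₀ := by
    have h1 : Φ ^ 2 ≤ 4 ^ k + 2 * |ε| * K₁ + 2 * |ε| * K₂ * Φ := by
      have h2 : η - x₀ ≤ 2 := by linarith [hx₀mem.1]
      have h3 : 0 ≤ η - x₀ := by linarith [hx₀mem.2]
      have h4 : (|ε| * (K₁ + K₂ * Φ)) * (η - x₀) ≤ (|ε| * (K₁ + K₂ * Φ)) * 2 :=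
        mul_le_mul_of_nonneg_left h2 (by positivity)
      have h5 : g x₀ - (η ^ (2 * k) - x₀ ^ (2 * k)) ≤ |u x₀| := le_abs_self _
      rw [hΦsq]
      have := hS.trans h4
      nlinarith
    have h6 : Φ ^ 2 ≤ a + Φ := by
      rw [hadef]
      have e1 : 2 * |ε| * K₁ ≤ 2 * K₁ := by nlinarith [abs_nonneg ε]
      have e2 : 2 * |ε| * K₂ * Φ ≤ Φ := by nlinarith [abs_nonneg ε]
      linarith
    rw [hΦ₀def]
    nlinarith [sq_nonneg (Φ - (a + 1))]
  have hΦ₀pt : ∀ t ∈ Set.Icc (0:ℝ) η, φ₂ t ε η ≤ Φ₀ :=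
    fun t ht => (hΦpt t ht).trans hΦub
  have hub : ∀ s ∈ Set.Icc (0:ℝ) η, |u s| ≤ (|ε| * Kt) * (η - s) := by
    intro s hs
    rw [hKtdef]
    exact key Φ₀ hΦ₀0 hΦ₀pt s hs
  -- final estimate at the point x
  set y : ℝ := -x with hydef
  have hymem : y ∈ Set.Icc (0:ℝ) η := ⟨by linarith [hx.2], by linarith [hx.1]⟩
  have hxy : x ^ (2 * k) = y ^ (2 * k) := by
    rw [hydef, (even_two_mul k).neg_pow]
  have hgoal : φ₂ (-x) ε η = φ₂ y ε η := rfl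
  rw [hgoal, hxy]
  set h : ℝ := η ^ (2 * k) - y ^ (2 * k) with hhdef
  have hh0 : 0 ≤ h := by
    rw [hhdef]
    have := pow_le_pow_left₀ hymem.1 hymem.2 (2 * k)
    linarith
  have hφy0 := hnonneg y hymem
  have huy : |u y| ≤ (|ε| * Kt) * (η - y) := hub y hymem
  clear hODE hu' key hgcont hmax hS hΦub hΦpt hΦ₀pt hΦsq hΦnn hhx₀ hεK₂ hδ hball
    hOn hcontG hcontG' hM₁ hM₂ hMG hMG' hFneg hG hεε₀ hεr hε1 hub hgoal hφ₂ hεlt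
  clear_value g u D Φ M K₁ K₂ a Φ₀ Kt c C r y G ε'
  by_cases hd : y = η
  · rw [hd, hzero]
    rw [hhdef, hd]
    simp only [sub_self, Real.sqrt_zero, sub_zero, abs_zero]
    exact mul_nonneg hC0.le (abs_nonneg ε)
  · have hylt : y < η := lt_of_le_of_ne hymem.2 hd
    have hdpos : 0 < η - y := by linarith
    have hdle2 : η - y ≤ 2 := by linarith [hymem.1]
    -- h ≥ c * (η - y)
    have hch : c * (η - y) ≤ h := by
      have e1 : η ^ (2 * k) = η ^ (2 * k - 1) * η := by
        rw [← pow_succ]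
        congr 1
        omega
      have e2 : y ^ (2 * k) = y ^ (2 * k - 1) * y := by
        rw [← pow_succ]
        congr 1
        omega
      have e3 : y ^ (2 * k - 1) ≤ η ^ (2 * k - 1) := pow_le_pow_left₀ hymem.1 hymem.2 _
      have e4 : c ≤ η ^ (2 * k - 1) := by
        rw [hcdef]
        apply pow_le_pow_left₀ (by linarith [hη₀.2]) (by linarith) _
      have f1 : 0 ≤ (η ^ (2 * k - 1) - c) * (η - y) :=
        mul_nonneg (by linarith) (by linarith)
      have f2 : 0 ≤ (η ^ (2 * k - 1) - y ^ (2 * k - 1)) * y :=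
        mul_nonneg (by linarith) hymem.1
      have expand : (η ^ (2 * k - 1) - c) * (η - y) + (η ^ (2 * k - 1) - y ^ (2 * k - 1)) * y
          = (η ^ (2 * k - 1) * η - y ^ (2 * k - 1) * y) - c * (η - y) := by ring
      rw [hhdef, e1, e2]
      linarith only [f1, f2, expand]
    have hhpos : 0 < h := lt_of_lt_of_le (mul_pos hc0 hdpos) hch
    have hsq : 0 < Real.sqrt h := Real.sqrt_pos.mpr hhpos
    -- |φ₂ y - √h| * √h ≤ |u y|
    have hmain : |φ₂ y ε η - Real.sqrt h| * Real.sqrt h ≤ |u y| := by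
      have s1 : |φ₂ y ε η - Real.sqrt h| * Real.sqrt h
          ≤ |φ₂ y ε η - Real.sqrt h| * (φ₂ y ε η + Real.sqrt h) :=
        mul_le_mul_of_nonneg_left (by linarith) (abs_nonneg _)
      have s2 : |φ₂ y ε η - Real.sqrt h| * (φ₂ y ε η + Real.sqrt h)
          = |(φ₂ y ε η - Real.sqrt h) * (φ₂ y ε η + Real.sqrt h)| := by
        rw [abs_mul, abs_of_nonneg (by linarith [Real.sqrt_nonneg h] : 0 ≤ φ₂ y ε η + Real.sqrt h)]
      have s3 : (φ₂ y ε η - Real.sqrt h) * (φ₂ y ε η + Real.sqrt h) = u y := by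
        have hs : Real.sqrt h ^ 2 = h := Real.sq_sqrt hh0
        rw [hudef]
        simp only [hgdef]
        rw [← hhdef]
        linear_combination (-1 : ℝ) * hs
      rw [s2, s3] at s1
      exact s1
    -- Kt * (η - y) ≤ C * √h
    have hKtC : Kt * (η - y) ≤ C * Real.sqrt h := by
      have w1 : Real.sqrt (c * (η - y)) ≤ Real.sqrt h := Real.sqrt_le_sqrt hch
      have w2 : Kt * (η - y) ≤ C * Real.sqrt (c * (η - y)) := by
        have q1 : (Kt * (η - y)) ^ 2 ≤ (C * Real.sqrt (c * (η - y))) ^ 2 := by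
          rw [mul_pow, mul_pow, Real.sq_sqrt (mul_nonneg hc0.le hdpos.le)]
          rw [hCdef, mul_pow, Real.sq_sqrt (by positivity : (0:ℝ) ≤ 2 / c)]
          have : (Kt + 1) ^ 2 * (2 / c) * (c * (η - y)) = 2 * (Kt + 1) ^ 2 * (η - y) := by
            field_simp
          rw [this]
          nlinarith only [mul_nonneg (mul_nonneg (sq_nonneg Kt) hdpos.le)
              (by linarith : (0:ℝ) ≤ 2 - (η - y)),
            mul_nonneg hKt0 hdpos.le, hdpos.le]
        have q2 : 0 ≤ Kt * (η - y) := mul_nonneg hKt0 hdpos.le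
        have q3 : 0 ≤ C * Real.sqrt (c * (η - y)) :=
          mul_nonneg hC0.le (Real.sqrt_nonneg _)
        exact (pow_le_pow_iff_left₀ q2 q3 two_ne_zero).mp q1
      calc Kt * (η - y) ≤ C * Real.sqrt (c * (η - y)) := w2
        _ ≤ C * Real.sqrt h := mul_le_mul_of_nonneg_left w1 hC0.le
    -- conclude
    have hfin : |φ₂ y ε η - Real.sqrt h| * Real.sqrt h ≤ (C * |ε|) * Real.sqrt h := by
      calc |φ₂ y ε η - Real.sqrt h| * Real.sqrt h ≤ |u y| := hmain
        _ ≤ (|ε| * Kt) * (η - y) := huy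
        _ = |ε| * (Kt * (η - y)) := by ring
        _ ≤ |ε| * (C * Real.sqrt h) := mul_le_mul_of_nonneg_left hKtC (abs_nonneg ε)
        _ = (C * |ε|) * Real.sqrt h := by ring
    exact le_of_mul_le_mul_right hfin hsq

/-- If `φ_{J₂F}` is the solution family for `J₂F`, then
`y₂(x) = φ_{J₂F}(−x; ε, η)`, defined for `x ∈ [−η,0]`, solves the original
equation `d(y²)/dx = −2k x^(2k−1) A_F(εx) − ε^p y x^(p+k−1) B_F(εx)`;
moreover `y₂(−η) = 0` and `y₂(x) = (η^(2k) − x^(2k))^(1/2) + O(ε)`. -/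
theorem statement13 (k p : ℕ) (hk : 1 ≤ k) (hp : 1 ≤ p)
    (F : ℝ → ℝ) (hF : AnalyticAt ℝ F 0)
    (ε₀ η₀ : ℝ) (hε₀ : 0 < ε₀) (hη₀ : η₀ ∈ Set.Ioo (0:ℝ) 1)
    (φ₂ : ℝ → ℝ → ℝ → ℝ)
    (hφ₂ : SolFam k p (J2 k p F) ε₀ η₀ φ₂) :
    (∀ ε η : ℝ, |ε| < ε₀ → η ∈ Set.Ioo (1 - η₀) (1 + η₀) →
      φ₂ (-(-η)) ε η = 0 ∧
      (∀ x ∈ Set.Icc (-η) (0:ℝ),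
        HasDerivWithinAt (fun t => (φ₂ (-t) ε η) ^ 2)
          (-2 * k * x ^ (2 * k - 1) * AfunR p F (ε * x)
            - ε ^ p * φ₂ (-x) ε η * x ^ (p + k - 1) * BfunR k p F (ε * x))
          (Set.Icc (-η) 0) x)) ∧
    (∃ C > (0:ℝ), ∃ ε' > (0:ℝ), ε' ≤ ε₀ ∧
      ∀ ε η : ℝ, |ε| < ε' → η ∈ Set.Ioo (1 - η₀) (1 + η₀) →
        ∀ x ∈ Set.Icc (-η) (0:ℝ),
          |φ₂ (-x) ε η - Real.sqrt (η ^ (2 * k) - x ^ (2 * k))| ≤ C * |ε|) := by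
  exact ⟨part1 k p hk hp F ε₀ η₀ hε₀ hη₀ φ₂ hφ₂,
    part2 k p hk hp F hF ε₀ η₀ hε₀ hη₀ φ₂ hφ₂⟩
end

section
/- Let k, p be positive integers, F analytic at 0, and define (J₃F)(x) = (−1)^{p+k−1} F(−x) and (J₄F)(x) = −F(x). With φ_G(x; ε, η) as in the preceding statement, the function y₃(x) = −φ_{J₃F}(−x; ε, η), defined for x ∈ [−η, 0], and the function y₄(x) = −φ_{J₄F}(x; ε, η), defined for x ∈ [0, η], are both solutions of d(y²)/dx = −2k x^{2k−1} A_F(εx) − ε^{p} y x^{p+k−1} B_F(εx); moreover y₃(−η) = 0, y₄(η) = 0, y₃(x) = −(η^{2k}−x^{2k})^{1/2} + O(ε) and y₄(x) = −(η^{2k}−x^{2k})^{1/2} + O(ε). -/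
/-- `(J₃G)(x) = (−1)^(p+k−1) G(−x)`. -/
noncomputable def J3 (k p : ℕ) (G : ℝ → ℝ) : ℝ → ℝ :=
  fun x => (-1 : ℝ) ^ (p + k - 1) * G (-x)

/-- `(J₄G)(x) = −G(x)`. -/
noncomputable def J4 (G : ℝ → ℝ) : ℝ → ℝ := fun x => -G x

open Set Real

lemma neg_one_pow_sq (m : ℕ) : ((-1 : ℝ) ^ m) ^ 2 = 1 := by
  rw [← pow_mul, mul_comm, pow_mul]; norm_num

lemma AfunR_J3 (k p : ℕ) (F : ℝ → ℝ) (z : ℝ) :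
    AfunR p (J3 k p F) z = AfunR p F (-z) := by
  simp only [AfunR, J3, mul_pow, neg_one_pow_sq, Even.neg_pow (even_two_mul p)]
  ring

lemma deriv_J3 (k p : ℕ) (F : ℝ → ℝ) (z : ℝ) :
    deriv (J3 k p F) z = (-1 : ℝ) ^ (p + k - 1) * -(deriv F (-z)) := by
  unfold J3
  rw [deriv_const_mul_field, deriv_comp_neg]

lemma BfunR_J3 (k p : ℕ) (F : ℝ → ℝ) (z : ℝ) :
    BfunR k p (J3 k p F) z = (-1 : ℝ) ^ (p + k - 1) * BfunR k p F (-z) := by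
  simp only [BfunR, J3, deriv_J3]; ring

lemma AfunR_J4 (p : ℕ) (F : ℝ → ℝ) (z : ℝ) : AfunR p (J4 F) z = AfunR p F z := by
  simp [AfunR, J4]

lemma deriv_J4 (F : ℝ → ℝ) (z : ℝ) : deriv (J4 F) z = -deriv F z := by
  unfold J4; exact deriv.neg

lemma BfunR_J4 (k p : ℕ) (F : ℝ → ℝ) (z : ℝ) : BfunR k p (J4 F) z = -BfunR k p F z := by
  simp only [BfunR, J4, deriv_J4]; ring

lemma apriori_bound (C₁ C₂ : ℝ) (hC₁ : 0 ≤ C₁) (hC₂ : 0 < C₂) {η : ℝ} (hηpos : 0 < η)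
    (hη2 : η ≤ 2) (ψ ψ' : ℝ → ℝ)
    (hψ : ∀ x ∈ Set.Icc (0:ℝ) η, HasDerivWithinAt ψ (ψ' x) (Set.Icc 0 η) x)
    (hψ0 : ∀ x ∈ Set.Icc (0:ℝ) η, 0 ≤ ψ x)
    (hψη : ψ η = 0)
    (hlb : ∀ x ∈ Set.Icc (0:ℝ) η, -(C₁ + C₂ + C₂ * ψ x) ≤ ψ' x) :
    ∀ x ∈ Set.Icc (0:ℝ) η, ψ x ≤ (C₁ + C₂) / C₂ * Real.exp (2 * C₂) := by
  set D : ℝ := (C₁ + C₂) / C₂ with hD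
  have hDpos : 0 < D := div_pos (by linarith) hC₂
  have hC₂D : C₂ * D = C₁ + C₂ := by rw [hD]; field_simp
  have hψcont : ContinuousOn ψ (Set.Icc 0 η) := fun x hx => (hψ x hx).continuousWithinAt
  set w : ℝ → ℝ := fun t => (ψ t + D) * Real.exp (C₂ * t) with hw
  have hwcont : ContinuousOn w (Set.Icc 0 η) := by
    exact (hψcont.add continuousOn_const).mul
      ((Real.continuous_exp.comp (continuous_const.mul continuous_id)).continuousOn)
  have hmono : MonotoneOn w (Set.Icc 0 η) := by
    apply monotoneOn_of_hasDerivWithinAt_nonneg (convex_Icc 0 η) hwcont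
      (f' := fun x => (ψ' x + C₂ * (ψ x + D)) * Real.exp (C₂ * x))
    · intro x hx
      rw [interior_Icc] at hx
      have hxI : x ∈ Set.Icc (0:ℝ) η := Ioo_subset_Icc_self hx
      have h1 : HasDerivWithinAt (fun t => ψ t + D) (ψ' x) (Set.Ioo 0 η) x :=
        ((hψ x hxI).mono Ioo_subset_Icc_self).add_const D
      have hinner : HasDerivAt (fun t : ℝ => C₂ * t) C₂ x := by
        simpa using (hasDerivAt_id x).const_mul C₂
      have h2 : HasDerivAt (fun t => Real.exp (C₂ * t)) (Real.exp (C₂ * x) * C₂) x := by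
        exact (Real.hasDerivAt_exp (C₂ * x)).comp x hinner
      have h3 := h1.mul h2.hasDerivWithinAt
      rw [interior_Icc]
      convert h3 using 1 <;> try rfl
      ring
    · intro x hx
      rw [interior_Icc] at hx
      have hxI : x ∈ Set.Icc (0:ℝ) η := Ioo_subset_Icc_self hx
      have hlbx := hlb x hxI
      have ha : 0 ≤ ψ' x + C₂ * (ψ x + D) := by nlinarith
      exact mul_nonneg ha (Real.exp_pos _).le
  intro x hx
  have hxw := hmono hx (⟨hηpos.le, le_refl η⟩ : η ∈ Set.Icc (0:ℝ) η) hx.2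
  have hwη : w η = D * Real.exp (C₂ * η) := by simp [hw, hψη]
  have hexpmono : Real.exp (C₂ * η) ≤ Real.exp (2 * C₂) := by
    apply Real.exp_le_exp.mpr; nlinarith
  have hexp1 : 1 ≤ Real.exp (C₂ * x) := Real.one_le_exp (by nlinarith [hx.1])
  have hψx := hψ0 x hx
  have hwx : ψ x ≤ w x := by
    have : (ψ x + D) * 1 ≤ (ψ x + D) * Real.exp (C₂ * x) :=
      mul_le_mul_of_nonneg_left hexp1 (by linarith)
    simp only [hw]; nlinarith
  calc ψ x ≤ w x := hwx
    _ ≤ w η := hxw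
    _ = D * Real.exp (C₂ * η) := hwη
    _ ≤ D * Real.exp (2 * C₂) := mul_le_mul_of_nonneg_left hexpmono hDpos.le

lemma aux_eps_pow {ε : ℝ} (p : ℕ) (hp : 1 ≤ p) (hε1 : |ε| ≤ 1) : |ε| ^ p ≤ |ε| := by
  calc |ε| ^ p ≤ |ε| ^ 1 := pow_le_pow_of_le_one (abs_nonneg ε) hε1 hp
    _ = |ε| := pow_one _

lemma aux_eps_t_pow {ε t : ℝ} (p : ℕ) (hp : 1 ≤ p) (hε1 : |ε| ≤ 1) (ht0 : 0 ≤ t)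
    (ht2 : t ≤ 2) : (ε * t) ^ (2 * p) ≤ 4 ^ p * |ε| := by
  have hεabs : (0:ℝ) ≤ |ε| := abs_nonneg ε
  have htabs : |t| ≤ 2 := by rw [abs_of_nonneg ht0]; exact ht2
  have h1 : (ε * t) ^ 2 ≤ 4 * |ε| := by
    have e1 : (ε * t) ^ 2 = |ε| ^ 2 * |t| ^ 2 := by rw [← sq_abs, abs_mul]; ring
    rw [e1]
    have h2 : |ε| ^ 2 ≤ |ε| := by nlinarith
    have h3 : |t| ^ 2 ≤ 4 := by nlinarith [abs_nonneg t]
    nlinarith [sq_nonneg |t|, abs_nonneg t]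
  calc (ε * t) ^ (2 * p) = ((ε * t) ^ 2) ^ p := by rw [pow_mul]
    _ ≤ (4 * |ε|) ^ p := pow_le_pow_left₀ (sq_nonneg _) h1 p
    _ = 4 ^ p * |ε| ^ p := mul_pow _ _ _
    _ ≤ 4 ^ p * |ε| := by
        have h4 : (0:ℝ) ≤ (4:ℝ) ^ p := by positivity
        nlinarith [aux_eps_pow p hp hε1]

lemma aux_A_bnd (p : ℕ) (G : ℝ → ℝ) (z M : ℝ) (hG : |G z| ≤ M) (hz : |z| ≤ 2) :
    1 ≤ AfunR p G z ∧ AfunR p G z ≤ 1 + 4 ^ p * M ^ 2 := by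
  have h0 : (0:ℝ) ≤ z ^ (2 * p) := by rw [pow_mul]; positivity
  have hsq : G z ^ 2 ≤ M ^ 2 := by nlinarith [abs_nonneg (G z), sq_abs (G z)]
  have hz2 : z ^ (2 * p) ≤ 4 ^ p := by
    rw [pow_mul]
    exact pow_le_pow_left₀ (sq_nonneg z) (by nlinarith [sq_abs z, abs_nonneg z]) p
  constructor
  · unfold AfunR; nlinarith [sq_nonneg (G z)]
  · unfold AfunR
    nlinarith [sq_nonneg (G z), (by positivity : (0:ℝ) ≤ (4:ℝ) ^ p),
      mul_le_mul hz2 hsq (sq_nonneg _) (by positivity)]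

lemma aux_B_bnd (k p : ℕ) (G : ℝ → ℝ) (z M : ℝ) (hG : |G z| ≤ M)
    (hG' : |deriv G z| ≤ M) (hz : |z| ≤ 2) :
    |BfunR k p G z| ≤ (4 + 2 * (p:ℝ) + 4 * (k:ℝ)) * M := by
  unfold BfunR
  refine le_trans (abs_add_le _ _) ?_
  have e1 : |2 * z * deriv G z| = 2 * |z| * |deriv G z| := by
    rw [abs_mul, abs_mul, abs_two]
  have e2 : |2 * ((p:ℝ) + 2 * k) * G z| = 2 * ((p:ℝ) + 2 * k) * |G z| := by
    rw [abs_mul, abs_mul, abs_two, abs_of_nonneg (by positivity : (0:ℝ) ≤ (p:ℝ) + 2 * k)]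
  rw [e1, e2]
  have hmm1 : |z| * |deriv G z| ≤ 2 * M :=
    mul_le_mul hz hG' (abs_nonneg _) (by norm_num)
  have hmm2 : ((p:ℝ) + 2 * k) * |G z| ≤ ((p:ℝ) + 2 * k) * M :=
    mul_le_mul_of_nonneg_left hG (by positivity)
  nlinarith

lemma aux_lb (k p : ℕ) (A₀ B₀ x Aε Bε εv φv : ℝ)
    (hA1 : 1 ≤ Aε) (hA2 : Aε ≤ A₀) (hB0 : 0 ≤ B₀) (hB : |Bε| ≤ B₀)
    (hε : |εv| ≤ 1) (hφ : 0 ≤ φv) (hx0 : 0 ≤ x)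
    (hp1 : x ^ (2*k-1) ≤ 2 ^ (2*k)) (hp2 : x ^ (p+k-1) ≤ 2 ^ (p+k)) :
    -((2 * (k:ℝ) * 2 ^ (2*k) * A₀) + 2 ^ (p+k) * B₀ + 2 ^ (p+k) * B₀ * φv ^ 2) ≤
      -2 * (k:ℝ) * x ^ (2 * k - 1) * Aε - εv ^ p * φv * x ^ (p + k - 1) * Bε := by
  have h1 : 2 * (k:ℝ) * (x ^ (2*k-1) * Aε) ≤ 2 * (k:ℝ) * 2 ^ (2*k) * A₀ := by
    have h0 := mul_le_mul hp1 hA2 (by linarith) (by positivity)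
    have := mul_le_mul_of_nonneg_left h0 (by positivity : (0:ℝ) ≤ 2 * (k:ℝ))
    linarith
  have h2 : |εv ^ p * φv * x ^ (p + k - 1) * Bε| ≤ 2 ^ (p+k) * B₀ * (1 + φv ^ 2) := by
    rw [abs_mul, abs_mul, abs_mul]
    have hb1 : |εv ^ p| ≤ 1 := by rw [abs_pow]; exact pow_le_one₀ (abs_nonneg _) hε
    have hb2 : |φv| ≤ 1 + φv ^ 2 := by
      rw [abs_of_nonneg hφ]; nlinarith [sq_nonneg (φv - 1)]
    have hb3 : |x ^ (p+k-1)| ≤ 2 ^ (p+k) := by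
      rw [abs_of_nonneg (pow_nonneg hx0 _)]; exact hp2
    calc |εv ^ p| * |φv| * |x ^ (p+k-1)| * |Bε|
        ≤ 1 * (1 + φv ^ 2) * 2 ^ (p+k) * B₀ := by
          apply mul_le_mul _ hB (abs_nonneg _) (by positivity)
          apply mul_le_mul _ hb3 (abs_nonneg _) (by positivity)
          exact mul_le_mul hb1 hb2 (abs_nonneg _) (by norm_num)
      _ = 2 ^ (p+k) * B₀ * (1 + φv ^ 2) := by ring
  have h3 := le_abs_self (εv ^ p * φv * x ^ (p + k - 1) * Bε)
  nlinarith

lemma aux_gb (k p : ℕ) (x M Φ B₀ Bε εv φv gv : ℝ)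
    (hx0 : 0 ≤ x) (hp1 : x ^ (2*k-1) ≤ 2 ^ (2*k)) (hp2 : x ^ (p+k-1) ≤ 2 ^ (p+k))
    (hεt : (εv * x) ^ (2*p) ≤ 4 ^ p * |εv|) (hg2 : gv ^ 2 ≤ M ^ 2)
    (hεp : |εv| ^ p ≤ |εv|) (hφ0 : 0 ≤ φv) (hφΦ : φv ≤ Φ) (hB : |Bε| ≤ B₀) :
    |(-(2 * (k:ℝ) * x ^ (2*k-1) * ((εv * x) ^ (2*p) * gv ^ 2))
        - εv ^ p * φv * x ^ (p + k - 1) * Bε)|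
      ≤ (2 * (k:ℝ) * 2 ^ (2*k) * (4 ^ p * M ^ 2) + Φ * 2 ^ (p+k) * B₀) * |εv| := by
  have hεabs : (0:ℝ) ≤ |εv| := abs_nonneg εv
  have hΦ0 : 0 ≤ Φ := le_trans hφ0 hφΦ
  have hB0 : 0 ≤ B₀ := le_trans (abs_nonneg _) hB
  have h0 : (0:ℝ) ≤ (εv * x) ^ (2*p) := by rw [pow_mul]; positivity
  have hX : |2 * (k:ℝ) * x ^ (2*k-1) * ((εv * x) ^ (2*p) * gv ^ 2)| ≤
      2 * (k:ℝ) * 2 ^ (2*k) * (4 ^ p * M ^ 2) * |εv| := by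
    have hXnn : (0:ℝ) ≤ 2 * (k:ℝ) * x ^ (2*k-1) * ((εv * x) ^ (2*p) * gv ^ 2) :=
      mul_nonneg (mul_nonneg (by positivity) (pow_nonneg hx0 _))
        (mul_nonneg h0 (sq_nonneg _))
    rw [abs_of_nonneg hXnn]
    have m1 : x ^ (2*k-1) * ((εv * x) ^ (2*p) * gv ^ 2) ≤
        2 ^ (2*k) * ((4 ^ p * |εv|) * M ^ 2) :=
      mul_le_mul hp1 (mul_le_mul hεt hg2 (sq_nonneg _) (by positivity))
        (mul_nonneg h0 (sq_nonneg _)) (by positivity)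
    calc 2 * (k:ℝ) * x ^ (2*k-1) * ((εv * x) ^ (2*p) * gv ^ 2)
        = 2 * (k:ℝ) * (x ^ (2*k-1) * ((εv * x) ^ (2*p) * gv ^ 2)) := by ring
      _ ≤ 2 * (k:ℝ) * (2 ^ (2*k) * ((4 ^ p * |εv|) * M ^ 2)) :=
          mul_le_mul_of_nonneg_left m1 (by positivity)
      _ = 2 * (k:ℝ) * 2 ^ (2*k) * (4 ^ p * M ^ 2) * |εv| := by ring
  have hY : |εv ^ p * φv * x ^ (p + k - 1) * Bε| ≤ Φ * 2 ^ (p+k) * B₀ * |εv| := by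
    rw [abs_mul, abs_mul, abs_mul]
    have m2 : |εv ^ p| ≤ |εv| := by rw [abs_pow]; exact hεp
    have m3 : |φv| ≤ Φ := by rw [abs_of_nonneg hφ0]; exact hφΦ
    have m4 : |x ^ (p+k-1)| ≤ 2 ^ (p+k) := by
      rw [abs_of_nonneg (pow_nonneg hx0 _)]; exact hp2
    calc |εv ^ p| * |φv| * |x ^ (p+k-1)| * |Bε|
        ≤ |εv| * Φ * 2 ^ (p+k) * B₀ := by
          apply mul_le_mul _ hB (abs_nonneg _) (by positivity)
          apply mul_le_mul _ m4 (abs_nonneg _) (mul_nonneg hεabs hΦ0)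
          exact mul_le_mul m2 m3 (abs_nonneg _) hεabs
      _ = Φ * 2 ^ (p+k) * B₀ * |εv| := by ring
  rw [sub_eq_add_neg]
  refine le_trans (abs_add_le _ _) ?_
  rw [abs_neg, abs_neg]
  refine le_trans (add_le_add hX hY) (le_of_eq (by ring))

lemma aux_sqrt (a b c2 e K : ℝ) (ha : 0 ≤ a) (hb : 0 ≤ b) (hc : 0 < c2) (he : 0 < e)
    (he2 : e ≤ 2) (hlb : c2 * e ≤ b) (hab : |a - b| ≤ K * e) (hK : 0 ≤ K) :
    |Real.sqrt a - Real.sqrt b| * Real.sqrt c2 ≤ K * Real.sqrt 2 := by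
  have hdiff : (Real.sqrt a - Real.sqrt b) * (Real.sqrt a + Real.sqrt b) = a - b := by
    have h1 := Real.sq_sqrt ha
    have h2 := Real.sq_sqrt hb
    nlinarith
  have hkey1 : |Real.sqrt a - Real.sqrt b| * Real.sqrt b ≤ |a - b| := by
    have h3 : |Real.sqrt a - Real.sqrt b| * (Real.sqrt a + Real.sqrt b) = |a - b| := by
      rw [← hdiff, abs_mul,
        abs_of_nonneg (add_nonneg (Real.sqrt_nonneg a) (Real.sqrt_nonneg b))]
    nlinarith [abs_nonneg (Real.sqrt a - Real.sqrt b), Real.sqrt_nonneg a,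
      Real.sqrt_nonneg b]
  have hsb : Real.sqrt c2 * Real.sqrt e ≤ Real.sqrt b := by
    rw [← Real.sqrt_mul hc.le]
    exact Real.sqrt_le_sqrt hlb
  have hsqx : 0 < Real.sqrt e := Real.sqrt_pos.mpr he
  have h7 : |Real.sqrt a - Real.sqrt b| * (Real.sqrt c2 * Real.sqrt e) ≤ K * e :=
    le_trans (mul_le_mul_of_nonneg_left hsb (abs_nonneg _)) (le_trans hkey1 hab)
  have hmm : e = Real.sqrt e * Real.sqrt e := (Real.mul_self_sqrt he.le).symm
  have h8 : |Real.sqrt a - Real.sqrt b| * Real.sqrt c2 ≤ K * Real.sqrt e := by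
    apply le_of_mul_le_mul_right _ hsqx
    calc |Real.sqrt a - Real.sqrt b| * Real.sqrt c2 * Real.sqrt e
        = |Real.sqrt a - Real.sqrt b| * (Real.sqrt c2 * Real.sqrt e) := by ring
      _ ≤ K * e := h7
      _ = K * (Real.sqrt e * Real.sqrt e) := by rw [← hmm]
      _ = K * Real.sqrt e * Real.sqrt e := by ring
  calc |Real.sqrt a - Real.sqrt b| * Real.sqrt c2 ≤ K * Real.sqrt e := h8
    _ ≤ K * Real.sqrt 2 :=
        mul_le_mul_of_nonneg_left (Real.sqrt_le_sqrt he2) hK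

set_option maxHeartbeats 1000000 in
lemma key_bound (k p : ℕ) (hk : 1 ≤ k) (hp : 1 ≤ p) (η₀ : ℝ) (hη₀ : η₀ ∈ Set.Ioo (0:ℝ) 1)
    (r M : ℝ) (hr : 0 < r) (hM : 0 < M) :
    ∃ C > (0:ℝ), ∀ G : ℝ → ℝ, (∀ z : ℝ, |z| ≤ r → |G z| ≤ M ∧ |deriv G z| ≤ M) →
      ∀ ε η : ℝ, ∀ φ : ℝ → ℝ, |ε| < min (r / 2) 1 → η ∈ Set.Ioo (1 - η₀) (1 + η₀) →
      φ η = 0 → (∀ x ∈ Set.Icc (0:ℝ) η, 0 ≤ φ x) →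
      (∀ x ∈ Set.Icc (0:ℝ) η,
        HasDerivWithinAt (fun t => φ t ^ 2)
          (-2 * k * x ^ (2 * k - 1) * AfunR p G (ε * x)
            - ε ^ p * φ x * x ^ (p + k - 1) * BfunR k p G (ε * x)) (Set.Icc 0 η) x) →
      ∀ x ∈ Set.Icc (0:ℝ) η, |φ x - Real.sqrt (η ^ (2*k) - x ^ (2*k))| ≤ C * |ε| := by
  have hkR : (1:ℝ) ≤ (k:ℝ) := by exact_mod_cast hk
  set A₀ : ℝ := 1 + 4 ^ p * M ^ 2 with hA₀def
  set B₀ : ℝ := (4 + 2 * (p:ℝ) + 4 * (k:ℝ)) * M with hB₀def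
  set C₁ : ℝ := 2 * (k:ℝ) * 2 ^ (2 * k) * A₀ with hC₁def
  set C₂ : ℝ := 2 ^ (p + k) * B₀ with hC₂def
  have hA₀pos : 0 < A₀ := by rw [hA₀def]; positivity
  have hB₀pos : 0 < B₀ := by rw [hB₀def]; positivity
  have hC₁pos : 0 < C₁ := by
    rw [hC₁def]
    have h2 : (0:ℝ) < 2 ^ (2 * k) := by positivity
    have h3 : (0:ℝ) < 2 * (k:ℝ) := by linarith
    exact mul_pos (mul_pos h3 h2) hA₀pos
  have hC₂pos : 0 < C₂ := by rw [hC₂def]; positivity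
  set K₀ : ℝ := (C₁ + C₂) / C₂ * Real.exp (2 * C₂) with hK₀def
  have hK₀pos : 0 < K₀ := by
    rw [hK₀def]; exact mul_pos (div_pos (by linarith) hC₂pos) (Real.exp_pos _)
  set Φ : ℝ := Real.sqrt K₀ with hΦdef
  have hΦpos : 0 < Φ := Real.sqrt_pos.mpr hK₀pos
  set C₃ : ℝ := 2 * (k:ℝ) * 2 ^ (2 * k) * (4 ^ p * M ^ 2) + Φ * 2 ^ (p + k) * B₀ with hC₃def
  have hC₃pos : 0 < C₃ := by
    rw [hC₃def]
    have h1 : (0:ℝ) ≤ 2 * (k:ℝ) * 2 ^ (2 * k) * (4 ^ p * M ^ 2) := by positivity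
    have h2 : (0:ℝ) < Φ * 2 ^ (p + k) * B₀ :=
      mul_pos (mul_pos hΦpos (by positivity)) hB₀pos
    linarith
  set c : ℝ := (1 - η₀) ^ (2 * k) with hcdef
  have hη₀1 : (0:ℝ) < 1 - η₀ := by linarith [hη₀.2]
  have hcpos : 0 < c := by rw [hcdef]; positivity
  have hscpos : 0 < Real.sqrt c := Real.sqrt_pos.mpr hcpos
  refine ⟨C₃ * Real.sqrt 2 / Real.sqrt c,
    div_pos (mul_pos hC₃pos (Real.sqrt_pos.mpr two_pos)) hscpos, ?_⟩
  intro G hG ε η φ hεlt hη hφη hφ0 hODE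
  have hηpos : 0 < η := by
    have := hη.1; have := hη₀.2; linarith
  have hη2 : η < 2 := by have := hη.2; have := hη₀.2; linarith
  have hε1 : |ε| ≤ 1 := (lt_of_lt_of_le hεlt (min_le_right _ _)).le
  have hεr : |ε| ≤ r / 2 := (lt_of_lt_of_le hεlt (min_le_left _ _)).le
  have hεabs : (0:ℝ) ≤ |ε| := abs_nonneg ε
  have hGb : ∀ t ∈ Set.Icc (0:ℝ) η, |G (ε*t)| ≤ M ∧ |deriv G (ε*t)| ≤ M := by
    intro t ht
    refine hG _ ?_
    have ht2 : |t| ≤ 2 := by rw [abs_of_nonneg ht.1]; linarith [ht.2]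
    have := mul_le_mul hεr ht2 (abs_nonneg t) (by linarith : (0:ℝ) ≤ r/2)
    rw [abs_mul]; linarith
  have hεt2 : ∀ t ∈ Set.Icc (0:ℝ) η, |ε * t| ≤ 2 := by
    intro t ht
    have ht2 : |t| ≤ 2 := by rw [abs_of_nonneg ht.1]; linarith [ht.2]
    have := mul_le_mul hε1 ht2 (abs_nonneg t) zero_le_one
    rw [abs_mul]; linarith
  have hpow1 : ∀ t ∈ Set.Icc (0:ℝ) η, t ^ (2*k-1) ≤ 2 ^ (2*k) := by
    intro t ht
    calc t ^ (2*k-1) ≤ 2 ^ (2*k-1) :=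
          pow_le_pow_left₀ ht.1 (by linarith [ht.2]) _
      _ ≤ 2 ^ (2*k) := pow_le_pow_right₀ one_le_two (Nat.sub_le _ _)
  have hpow2 : ∀ t ∈ Set.Icc (0:ℝ) η, t ^ (p+k-1) ≤ 2 ^ (p+k) := by
    intro t ht
    calc t ^ (p+k-1) ≤ 2 ^ (p+k-1) :=
          pow_le_pow_left₀ ht.1 (by linarith [ht.2]) _
      _ ≤ 2 ^ (p+k) := pow_le_pow_right₀ one_le_two (Nat.sub_le _ _)
  have hψ0 : ∀ x ∈ Set.Icc (0:ℝ) η, 0 ≤ φ x ^ 2 := fun x _ => sq_nonneg _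
  have hlb : ∀ x ∈ Set.Icc (0:ℝ) η, -(C₁ + C₂ + C₂ * φ x ^ 2) ≤
      -2 * k * x ^ (2 * k - 1) * AfunR p G (ε * x)
        - ε ^ p * φ x * x ^ (p + k - 1) * BfunR k p G (ε * x) := by
    intro x hx
    have hAx := aux_A_bnd p G (ε*x) M (hGb x hx).1 (hεt2 x hx)
    have hBx := aux_B_bnd k p G (ε*x) M (hGb x hx).1 (hGb x hx).2 (hεt2 x hx)
    rw [hC₁def, hC₂def, hA₀def, hB₀def]
    exact aux_lb k p (1 + 4 ^ p * M ^ 2) ((4 + 2 * (p:ℝ) + 4 * (k:ℝ)) * M) x _ _ ε (φ x)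
      hAx.1 hAx.2 (by positivity) hBx hε1 (hφ0 x hx) hx.1 (hpow1 x hx) (hpow2 x hx)
  have hψub := apriori_bound C₁ C₂ hC₁pos.le hC₂pos hηpos (by linarith)
    (fun t => φ t ^ 2) _ hODE hψ0 (by simp [hφη]) hlb
  have hφub : ∀ x ∈ Set.Icc (0:ℝ) η, φ x ≤ Φ := by
    intro x hx
    rw [hΦdef]
    refine (Real.le_sqrt (hφ0 x hx) hK₀pos.le).mpr ?_
    rw [hK₀def]
    exact hψub x hx
  have hgderiv : ∀ t ∈ Set.Icc (0:ℝ) η,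
      HasDerivWithinAt (fun s => φ s ^ 2 - (η ^ (2*k) - s ^ (2*k)))
        ((fun t => (-2 * (k:ℝ) * t ^ (2 * k - 1) * AfunR p G (ε * t)
            - ε ^ p * φ t * t ^ (p + k - 1) * BfunR k p G (ε * t))
          + ((2*k : ℕ) : ℝ) * t ^ (2*k-1)) t) (Set.Icc 0 η) t := by
    intro t ht
    have h1 := (hODE t ht).sub
      (((hasDerivAt_pow (2*k) t).const_sub (η ^ (2*k))).hasDerivWithinAt)
    convert h1 using 1 <;> try rfl
    push_cast
    ring
  have hgbound : ∀ t ∈ Set.Icc (0:ℝ) η,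
      ‖(fun t => (-2 * (k:ℝ) * t ^ (2 * k - 1) * AfunR p G (ε * t)
            - ε ^ p * φ t * t ^ (p + k - 1) * BfunR k p G (ε * t))
          + ((2*k : ℕ) : ℝ) * t ^ (2*k-1)) t‖ ≤ C₃ * |ε| := by
    intro t ht
    have heq : (-2 * (k:ℝ) * t ^ (2 * k - 1) * AfunR p G (ε * t)
          - ε ^ p * φ t * t ^ (p + k - 1) * BfunR k p G (ε * t))
        + ((2*k : ℕ) : ℝ) * t ^ (2*k-1)
        = -(2 * (k:ℝ) * t ^ (2*k-1) * ((ε*t) ^ (2*p) * G (ε*t) ^ 2))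
          - ε ^ p * φ t * t ^ (p + k - 1) * BfunR k p G (ε * t) := by
      unfold AfunR; push_cast; ring
    simp only [Real.norm_eq_abs]
    rw [heq, hC₃def]
    exact aux_gb k p t M Φ B₀ _ ε (φ t) (G (ε*t)) ht.1 (hpow1 t ht) (hpow2 t ht)
      (aux_eps_t_pow p hp hε1 ht.1 (by linarith [ht.2]))
      (by nlinarith [(hGb t ht).1, abs_nonneg (G (ε*t)), sq_abs (G (ε*t))])
      (aux_eps_pow p hp hε1) (hφ0 t ht) (hφub t ht) (aux_B_bnd k p G (ε*t) M
        (hGb t ht).1 (hGb t ht).2 (hεt2 t ht) |>.trans (le_of_eq (by rw [hB₀def])))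
  intro x hx
  have hmvt := Convex.norm_image_sub_le_of_norm_hasDerivWithin_le hgderiv hgbound
    (convex_Icc 0 η) (⟨hηpos.le, le_refl η⟩ : η ∈ Set.Icc (0:ℝ) η) hx
  have hgx : |φ x ^ 2 - (η ^ (2*k) - x ^ (2*k))| ≤ C₃ * |ε| * (η - x) := by
    have h5 : ‖x - η‖ = η - x := by
      rw [Real.norm_eq_abs, abs_of_nonpos (by linarith [hx.2] : x - η ≤ 0)]; ring
    have h6 : φ η ^ 2 - (η ^ (2*k) - η ^ (2*k)) = 0 := by rw [hφη]; ring
    rw [h5] at hmvt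
    calc |φ x ^ 2 - (η ^ (2*k) - x ^ (2*k))|
        = ‖(φ x ^ 2 - (η ^ (2*k) - x ^ (2*k))) - (φ η ^ 2 - (η ^ (2*k) - η ^ (2*k)))‖ := by
          rw [h6, sub_zero, Real.norm_eq_abs]
      _ ≤ C₃ * |ε| * (η - x) := hmvt
  rcases eq_or_lt_of_le hx.2 with hxη | hxη
  · subst hxη
    rw [hφη, sub_self, Real.sqrt_zero, sub_zero, abs_zero]
    positivity
  · have hxk : x ^ (2*k) ≤ η ^ (2*k) := pow_le_pow_left₀ hx.1 hx.2 _
    have hb0 : (0:ℝ) ≤ η ^ (2*k) - x ^ (2*k) := by linarith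
    have hblb : c * (η - x) ≤ η ^ (2*k) - x ^ (2*k) := by
      have e1 : η ^ (2*k) = η ^ (2*k-1) * η := by
        rw [← pow_succ]; congr 1; omega
      have e2 : x ^ (2*k) = x ^ (2*k-1) * x := by
        rw [← pow_succ]; congr 1; omega
      have e3 : x ^ (2*k-1) ≤ η ^ (2*k-1) := pow_le_pow_left₀ hx.1 hx.2 _
      have e4 : c ≤ η ^ (2*k-1) := by
        rw [hcdef]
        calc (1-η₀) ^ (2*k) ≤ (1-η₀) ^ (2*k-1) :=
              pow_le_pow_of_le_one hη₀1.le (by linarith [hη₀.1]) (Nat.sub_le _ _)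
          _ ≤ η ^ (2*k-1) := pow_le_pow_left₀ hη₀1.le (by linarith [hη.1]) _
      rw [e1, e2]
      nlinarith [hx.1, pow_nonneg hx.1 (2*k-1)]
    have hψx : φ x = Real.sqrt (φ x ^ 2) := (Real.sqrt_sq (hφ0 x hx)).symm
    have hfin := aux_sqrt (φ x ^ 2) (η ^ (2*k) - x ^ (2*k)) c (η - x) (C₃ * |ε|)
      (sq_nonneg _) hb0 hcpos (by linarith) (by linarith [hx.1]) hblb hgx
      (mul_nonneg hC₃pos.le hεabs)
    rw [hψx, div_mul_eq_mul_div, le_div_iff₀ hscpos]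
    calc |Real.sqrt (φ x ^ 2) - Real.sqrt (η ^ (2*k) - x ^ (2*k))| * Real.sqrt c
        ≤ C₃ * |ε| * Real.sqrt 2 := hfin
      _ = C₃ * Real.sqrt 2 * |ε| := by ring

/-- If `φ_{J₃F}`, `φ_{J₄F}` are the solution families for
`J₃F`, `J₄F`, then `y₃(x) = −φ_{J₃F}(−x;ε,η)` on `[−η,0]` and
`y₄(x) = −φ_{J₄F}(x;ε,η)` on `[0,η]` both solve
`d(y²)/dx = −2k x^(2k−1) A_F(εx) − ε^p y x^(p+k−1) B_F(εx)`;
moreover `y₃(−η) = 0`, `y₄(η) = 0`, and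
`y₃(x) = −(η^(2k)−x^(2k))^(1/2) + O(ε)`, `y₄(x) = −(η^(2k)−x^(2k))^(1/2) + O(ε)`. -/
theorem statement14 (k p : ℕ) (hk : 1 ≤ k) (hp : 1 ≤ p)
    (F : ℝ → ℝ) (hF : AnalyticAt ℝ F 0)
    (ε₀ η₀ : ℝ) (hε₀ : 0 < ε₀) (hη₀ : η₀ ∈ Set.Ioo (0:ℝ) 1)
    (φ₃ φ₄ : ℝ → ℝ → ℝ → ℝ)
    (hφ₃ : SolFam k p (J3 k p F) ε₀ η₀ φ₃)
    (hφ₄ : SolFam k p (J4 F) ε₀ η₀ φ₄) :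
    (∀ ε η : ℝ, |ε| < ε₀ → η ∈ Set.Ioo (1 - η₀) (1 + η₀) →
      -φ₃ (-(-η)) ε η = 0 ∧
      -φ₄ η ε η = 0 ∧
      (∀ x ∈ Set.Icc (-η) (0:ℝ),
        HasDerivWithinAt (fun t => (-φ₃ (-t) ε η) ^ 2)
          (-2 * k * x ^ (2 * k - 1) * AfunR p F (ε * x)
            - ε ^ p * (-φ₃ (-x) ε η) * x ^ (p + k - 1) * BfunR k p F (ε * x))
          (Set.Icc (-η) 0) x) ∧
      (∀ x ∈ Set.Icc (0:ℝ) η,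
        HasDerivWithinAt (fun t => (-φ₄ t ε η) ^ 2)
          (-2 * k * x ^ (2 * k - 1) * AfunR p F (ε * x)
            - ε ^ p * (-φ₄ x ε η) * x ^ (p + k - 1) * BfunR k p F (ε * x))
          (Set.Icc 0 η) x)) ∧
    (∃ C > (0:ℝ), ∃ ε' > (0:ℝ), ε' ≤ ε₀ ∧
      ∀ ε η : ℝ, |ε| < ε' → η ∈ Set.Ioo (1 - η₀) (1 + η₀) →
        (∀ x ∈ Set.Icc (-η) (0:ℝ),
          |(-φ₃ (-x) ε η) - (-Real.sqrt (η ^ (2 * k) - x ^ (2 * k)))| ≤ C * |ε|) ∧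
        (∀ x ∈ Set.Icc (0:ℝ) η,
          |(-φ₄ x ε η) - (-Real.sqrt (η ^ (2 * k) - x ^ (2 * k)))| ≤ C * |ε|)) := by
  constructor
  · intro ε η hε hη
    obtain ⟨h3η, h3pos, -, h3ode⟩ := hφ₃ ε η hε hη
    obtain ⟨h4η, h4pos, -, h4ode⟩ := hφ₄ ε η hε hη
    refine ⟨by simp [h3η], by simp [h4η], ?_, ?_⟩
    · intro x hx
      have hu : -x ∈ Set.Icc (0:ℝ) η := ⟨by linarith [hx.2], by linarith [hx.1]⟩
      have hD := h3ode (-x) hu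
      have hneg : HasDerivWithinAt (fun t : ℝ => -t) (-1) (Set.Icc (-η) 0) x :=
        (hasDerivAt_neg' x).hasDerivWithinAt
      have hmaps : Set.MapsTo (fun t : ℝ => -t) (Set.Icc (-η) 0) (Set.Icc 0 η) := by
        intro t ht
        simp only [Set.mem_Icc] at *
        constructor <;> linarith [ht.1, ht.2]
      have hcomp := hD.comp x hneg hmaps
      have hfun : (fun t => (-φ₃ (-t) ε η) ^ 2) =
          ((fun t => φ₃ t ε η ^ 2) ∘ fun t : ℝ => -t) := by
        funext t; simp [Function.comp, neg_sq]
      rw [hfun]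
      convert hcomp using 1 <;> try rfl
      rw [AfunR_J3, BfunR_J3]
      simp only [mul_neg, neg_neg]
      have hsq : ((-1:ℝ) ^ (p + k - 1)) ^ 2 = 1 := neg_one_pow_sq _
      have hodd : (-x) ^ (2*k-1) = -(x ^ (2*k-1)) := Odd.neg_pow ⟨k-1, by omega⟩ x
      have hnp : (-x) ^ (p+k-1) = (-1:ℝ) ^ (p+k-1) * x ^ (p+k-1) := neg_pow x _
      rw [hodd, hnp]
      linear_combination (-(ε ^ p * φ₃ (-x) ε η * x ^ (p + k - 1) * BfunR k p F (ε * x))) * hsq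
    · intro x hx
      have hD := h4ode x hx
      have hfun : (fun t => (-φ₄ t ε η) ^ 2) = (fun t => φ₄ t ε η ^ 2) := by
        funext t; rw [neg_sq]
      rw [hfun]
      convert hD using 1
      rw [AfunR_J4, BfunR_J4]
      ring
  · -- quantitative part
    obtain ⟨δ, hδ, hball⟩ := Metric.eventually_nhds_iff.mp hF.eventually_analyticAt
    have hOn : AnalyticOnNhd ℝ F (Metric.ball (0:ℝ) δ) := fun y hy =>
      hball (by simpa [Real.dist_eq] using hy)
    have hOn' : AnalyticOnNhd ℝ (deriv F) (Metric.ball (0:ℝ) δ) := hOn.deriv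
    set r : ℝ := δ / 2 with hrdef
    have hr : 0 < r := half_pos hδ
    have hsub : Metric.closedBall (0:ℝ) r ⊆ Metric.ball 0 δ :=
      Metric.closedBall_subset_ball (by rw [hrdef]; linarith)
    have hcF : ContinuousOn F (Metric.closedBall (0:ℝ) r) := fun y hy =>
      ((hOn y (hsub hy)).continuousAt).continuousWithinAt
    have hcF' : ContinuousOn (deriv F) (Metric.closedBall (0:ℝ) r) := fun y hy =>
      ((hOn' y (hsub hy)).continuousAt).continuousWithinAt
    obtain ⟨M₁, hM₁⟩ := (isCompact_closedBall (0:ℝ) r).exists_bound_of_continuousOn hcF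
    obtain ⟨M₂, hM₂⟩ := (isCompact_closedBall (0:ℝ) r).exists_bound_of_continuousOn hcF'
    set M : ℝ := max M₁ M₂ + 1 with hMdef
    have hM₁0 : 0 ≤ M₁ :=
      le_trans (norm_nonneg _) (hM₁ 0 (Metric.mem_closedBall_self hr.le))
    have hMpos : 0 < M := by
      rw [hMdef]; have := le_max_left M₁ M₂; linarith
    have hbnd : ∀ z : ℝ, |z| ≤ r → |F z| ≤ M ∧ |deriv F z| ≤ M := by
      intro z hz
      have hzmem : z ∈ Metric.closedBall (0:ℝ) r := by
        simpa [Real.dist_eq] using hz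
      constructor
      · have := hM₁ z hzmem; rw [Real.norm_eq_abs] at this
        rw [hMdef]; have h2 := le_max_left M₁ M₂; linarith
      · have := hM₂ z hzmem; rw [Real.norm_eq_abs] at this
        rw [hMdef]; have h2 := le_max_right M₁ M₂; linarith
    have hbnd3 : ∀ z : ℝ, |z| ≤ r → |J3 k p F z| ≤ M ∧ |deriv (J3 k p F) z| ≤ M := by
      intro z hz
      have hz' : |(-z)| ≤ r := by rwa [abs_neg]
      obtain ⟨hf, hf'⟩ := hbnd (-z) hz'
      refine ⟨?_, ?_⟩
      · show |(-1:ℝ) ^ (p + k - 1) * F (-z)| ≤ M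
        rw [abs_mul, abs_pow, abs_neg, abs_one, one_pow, one_mul]; exact hf
      · rw [deriv_J3, abs_mul, abs_pow, abs_neg, abs_one, one_pow, one_mul, abs_neg]
        exact hf'
    have hbnd4 : ∀ z : ℝ, |z| ≤ r → |J4 F z| ≤ M ∧ |deriv (J4 F) z| ≤ M := by
      intro z hz
      obtain ⟨hf, hf'⟩ := hbnd z hz
      refine ⟨?_, ?_⟩
      · show |(-F z)| ≤ M
        rwa [abs_neg]
      · rw [deriv_J4, abs_neg]; exact hf'
    obtain ⟨C, hCpos, hkey⟩ := key_bound k p hk hp η₀ hη₀ r M hr hMpos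
    refine ⟨C, hCpos, min (min (r/2) 1) ε₀,
      lt_min (lt_min (half_pos hr) one_pos) hε₀, min_le_right _ _, ?_⟩
    intro ε η hε hη
    have hεε₀ : |ε| < ε₀ := lt_of_lt_of_le hε (min_le_right _ _)
    have hεm : |ε| < min (r/2) 1 := lt_of_lt_of_le hε (min_le_left _ _)
    obtain ⟨h3η, h3pos, -, h3ode⟩ := hφ₃ ε η hεε₀ hη
    obtain ⟨h4η, h4pos, -, h4ode⟩ := hφ₄ ε η hεε₀ hη
    constructor
    · intro x hx
      have hu : -x ∈ Set.Icc (0:ℝ) η := ⟨by linarith [hx.2], by linarith [hx.1]⟩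
      have h := hkey (J3 k p F) hbnd3 ε η (fun t => φ₃ t ε η) hεm hη h3η h3pos h3ode
        (-x) hu
      have hxe : (-x) ^ (2*k) = x ^ (2*k) := Even.neg_pow (even_two_mul k) x
      rw [hxe] at h
      calc |(-φ₃ (-x) ε η) - (-Real.sqrt (η ^ (2*k) - x ^ (2*k)))|
          = |φ₃ (-x) ε η - Real.sqrt (η ^ (2*k) - x ^ (2*k))| := by
            rw [show (-φ₃ (-x) ε η) - (-Real.sqrt (η ^ (2*k) - x ^ (2*k)))
              = -(φ₃ (-x) ε η - Real.sqrt (η ^ (2*k) - x ^ (2*k))) by ring, abs_neg]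
        _ ≤ C * |ε| := h
    · intro x hx
      have h := hkey (J4 F) hbnd4 ε η (fun t => φ₄ t ε η) hεm hη h4η h4pos h4ode x hx
      calc |(-φ₄ x ε η) - (-Real.sqrt (η ^ (2*k) - x ^ (2*k)))|
          = |φ₄ x ε η - Real.sqrt (η ^ (2*k) - x ^ (2*k))| := by
            rw [show (-φ₄ x ε η) - (-Real.sqrt (η ^ (2*k) - x ^ (2*k)))
              = -(φ₄ x ε η - Real.sqrt (η ^ (2*k) - x ^ (2*k))) by ring, abs_neg]
        _ ≤ C * |ε| := h
end
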